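/- Fix N, M, G ≥ 1, μ > 0, a nonempty finite user set K, and for each k ∈ K a matrix H_k ∈ ℂ^{(M+1)×N}, a group index g(k) ∈ {1,…,G}, a scalar a_k ∈ ℂ, reals b_k ≥ 0 and c_k. For F = (f₁,…,f_G) with fᵢ ∈ ℂ^N and e ∈ ℂ^{M+1}, define the quadratic surrogate rate R̃_k(F, e) = c_k + 2·Re( a_k · eᴴ H_k f_{g(k)} ) − b_k · Σ_{i=1}^{G} |eᴴ H_k fᵢ|², and the smoothed group rate f(F, e) = −(1/μ)·ln( Σ_{k∈K} exp(−μ·R̃_k(F, e)) ). Then f is biconcave: for every fixed e, the map F ↦ f(F, e) is concave on ℂ^{N×G}, and for every fixed F, the map e ↦ f(F, e) is concave on ℂ^{M+1} (concavity over the reals). -/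

import Mathlib

open Matrix

section Aux

variable {E : Type*} [AddCommGroup E] [Module ℝ E]

/-- A finite sum of convex functions is convex. -/
lemma convexOn_finset_sum {ι : Type*} (t : Finset ι) (f : ι → E → ℝ)
    (h : ∀ i ∈ t, ConvexOn ℝ Set.univ (f i)) :
    ConvexOn ℝ Set.univ fun x => ∑ i ∈ t, f i x := by
  classical
  induction t using Finset.cons_induction with
  | empty => simpa using convexOn_const (0 : ℝ) convex_univ
  | cons i t hi ih =>
    simp only [Finset.sum_cons]
    exact (h i (Finset.mem_cons_self i t)).add
      (ih fun j hj => h j (Finset.mem_cons_of_mem hj))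

/-- An ℝ-linear real functional is concave. -/
lemma concaveOn_linear (ℓ : E →ₗ[ℝ] ℝ) : ConcaveOn ℝ Set.univ fun x => ℓ x := by
  refine ⟨convex_univ, fun x _ y _ p q hp hq hpq => ?_⟩
  simp [map_add, _root_.map_smul, smul_eq_mul]

/-- For an ℝ-linear map `L : E →ₗ[ℝ] ℂ`, `x ↦ |L x|²` is convex. -/
lemma convexOn_abs_sq_linear (L : E →ₗ[ℝ] ℂ) :
    ConvexOn ℝ Set.univ fun x => ‖L x‖ ^ 2 := by
  have hre : ConvexOn ℝ Set.univ fun x => (Complex.reLm.comp L) x ^ 2 := by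
    have := (Even.convexOn_pow (even_two) (𝕜 := ℝ)).comp_linearMap (Complex.reLm.comp L)
    exact this
  have him : ConvexOn ℝ Set.univ fun x => (Complex.imLm.comp L) x ^ 2 := by
    have := (Even.convexOn_pow (even_two) (𝕜 := ℝ)).comp_linearMap (Complex.imLm.comp L)
    exact this
  have := hre.add him
  have heq : (fun x => ‖L x‖ ^ 2)
      = fun x => (Complex.reLm.comp L) x ^ 2 + (Complex.imLm.comp L) x ^ 2 := by
    funext x
    rw [Complex.sq_norm, Complex.normSq_apply]
    simp [sq]
  rw [heq]
  exact this

/-- Concavity of the quadratic surrogate built from ℝ-linear complex-valued maps. -/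
lemma concaveOn_surrogate {ι : Type*} [Fintype ι] (c : ℝ) (a : ℂ) (b : ℝ) (hb : 0 ≤ b)
    (L : ι → E →ₗ[ℝ] ℂ) (j : ι) :
    ConcaveOn ℝ Set.univ fun x =>
      c + 2 * (a * L j x).re - b * ∑ i, ‖L i x‖ ^ 2 := by
  have haff : ConcaveOn ℝ Set.univ fun x => c + 2 * (a * L j x).re := by
    have hlin : ConcaveOn ℝ Set.univ fun x =>
        ((2 : ℝ) • (Complex.reLm.comp ((LinearMap.mul ℂ ℂ a).restrictScalars ℝ ∘ₗ L j))) x :=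
      concaveOn_linear _
    have h := (concaveOn_const c convex_univ).add hlin
    have heq : (fun x => c + 2 * (a * L j x).re) = (fun _ : E => c) + fun x =>
        ((2 : ℝ) • (Complex.reLm.comp ((LinearMap.mul ℂ ℂ a).restrictScalars ℝ ∘ₗ L j))) x := by
      funext x
      simp [smul_eq_mul]
    rw [heq]
    exact h
  have hquad : ConvexOn ℝ Set.univ fun x => b * ∑ i, ‖L i x‖ ^ 2 := by
    have hsum : ConvexOn ℝ Set.univ fun x => ∑ i, ‖L i x‖ ^ 2 :=
      convexOn_finset_sum _ _ fun i _ => convexOn_abs_sq_linear (L i)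
    have := hsum.smul hb
    simpa [smul_eq_mul] using this
  have h := haff.add hquad.neg
  have heq : (fun x => c + 2 * (a * L j x).re - b * ∑ i, ‖L i x‖ ^ 2)
      = (fun x => c + 2 * (a * L j x).re) + fun x => -(b * ∑ i, ‖L i x‖ ^ 2) := by
    funext x
    simp [sub_eq_add_neg]
  rw [heq]
  exact h

/-- log-sum-exp of convex functions is convex. -/
lemma convexOn_logsumexp {ι : Type*} [Fintype ι] [Nonempty ι]
    (g : ι → E → ℝ) (hg : ∀ i, ConvexOn ℝ Set.univ (g i)) :
    ConvexOn ℝ Set.univ fun x => Real.log (∑ i, Real.exp (g i x)) := by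
  have hpos : ∀ x : E, (0 : ℝ) < ∑ i, Real.exp (g i x) := fun x =>
    Finset.sum_pos (fun i _ => Real.exp_pos _) Finset.univ_nonempty
  refine ⟨convex_univ, fun x _ y _ p q hp hq hpq => ?_⟩
  set Sx := ∑ i, Real.exp (g i x) with hSx
  set Sy := ∑ i, Real.exp (g i y) with hSy
  have hSxpos : 0 < Sx := hpos x
  have hSypos : 0 < Sy := hpos y
  have key : ∑ i, Real.exp (g i (p • x + q • y)) ≤ Sx ^ p * Sy ^ q := by
    have hbound : ∀ i : ι, Real.exp (g i (p • x + q • y)) ≤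
        Sx ^ p * Sy ^ q * (p * (Real.exp (g i x) / Sx) + q * (Real.exp (g i y) / Sy)) := by
      intro i
      have h2 : Real.exp (g i (p • x + q • y)) ≤ Real.exp (p * g i x + q * g i y) := by
        refine Real.exp_le_exp.2 ?_
        simpa [smul_eq_mul] using (hg i).2 (Set.mem_univ x) (Set.mem_univ y) hp hq hpq
      have h3 : Real.exp (p * g i x + q * g i y)
          = Real.exp (g i x) ^ p * Real.exp (g i y) ^ q := by
        rw [Real.exp_add, mul_comm p, mul_comm q, Real.exp_mul, Real.exp_mul]
      have h4 : Real.exp (g i x) ^ p * Real.exp (g i y) ^ q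
          = Sx ^ p * Sy ^ q *
            ((Real.exp (g i x) / Sx) ^ p * (Real.exp (g i y) / Sy) ^ q) := by
        rw [Real.div_rpow (Real.exp_pos _).le hSxpos.le,
            Real.div_rpow (Real.exp_pos _).le hSypos.le]
        have hx : (0:ℝ) < Sx ^ p := Real.rpow_pos_of_pos hSxpos p
        have hy : (0:ℝ) < Sy ^ q := Real.rpow_pos_of_pos hSypos q
        field_simp
        try ring
      have h5 : (Real.exp (g i x) / Sx) ^ p * (Real.exp (g i y) / Sy) ^ q ≤
          p * (Real.exp (g i x) / Sx) + q * (Real.exp (g i y) / Sy) :=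
        Real.geom_mean_le_arith_mean2_weighted hp hq
          (div_nonneg (Real.exp_pos _).le hSxpos.le)
          (div_nonneg (Real.exp_pos _).le hSypos.le) hpq
      calc Real.exp (g i (p • x + q • y))
          ≤ Real.exp (g i x) ^ p * Real.exp (g i y) ^ q := h2.trans_eq h3
        _ = Sx ^ p * Sy ^ q *
            ((Real.exp (g i x) / Sx) ^ p * (Real.exp (g i y) / Sy) ^ q) := h4
        _ ≤ Sx ^ p * Sy ^ q *
            (p * (Real.exp (g i x) / Sx) + q * (Real.exp (g i y) / Sy)) := by
          refine mul_le_mul_of_nonneg_left h5 ?_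
          positivity
    calc ∑ i, Real.exp (g i (p • x + q • y))
        ≤ ∑ i, Sx ^ p * Sy ^ q *
            (p * (Real.exp (g i x) / Sx) + q * (Real.exp (g i y) / Sy)) :=
          Finset.sum_le_sum fun i _ => hbound i
      _ = Sx ^ p * Sy ^ q := by
          rw [← Finset.mul_sum]
          have : ∑ i, (p * (Real.exp (g i x) / Sx) + q * (Real.exp (g i y) / Sy)) = 1 := by
            rw [Finset.sum_add_distrib, ← Finset.mul_sum, ← Finset.mul_sum,
              ← Finset.sum_div, ← Finset.sum_div, ← hSx, ← hSy,
              div_self hSxpos.ne', div_self hSypos.ne', mul_one, mul_one, hpq]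
          rw [this, mul_one]
  have hlog := Real.log_le_log (hpos _) key
  have hrhs : Real.log (Sx ^ p * Sy ^ q) = p * Real.log Sx + q * Real.log Sy := by
    rw [Real.log_mul (Real.rpow_pos_of_pos hSxpos p).ne' (Real.rpow_pos_of_pos hSypos q).ne',
      Real.log_rpow hSxpos, Real.log_rpow hSypos]
  simpa [smul_eq_mul, hrhs] using hlog

/-- From concavity of each `Rt k` to concavity of the smoothed objective. -/
lemma concaveOn_smoothed {ι : Type*} [Fintype ι] [Nonempty ι] (μ : ℝ) (hμ : 0 < μ)
    (R : ι → E → ℝ) (hR : ∀ k, ConcaveOn ℝ Set.univ (R k)) :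
    ConcaveOn ℝ Set.univ fun x => -(1 / μ) * Real.log (∑ k, Real.exp (-μ * R k x)) := by
  have hconv : ∀ k, ConvexOn ℝ Set.univ fun x => -μ * R k x := by
    intro k
    have := ((hR k).neg).smul hμ.le
    simpa [smul_eq_mul, mul_comm, neg_mul, mul_neg] using this
  have hLSE := convexOn_logsumexp (fun k x => -μ * R k x) hconv
  have h := (hLSE.neg).smul (le_of_lt (by positivity : (0:ℝ) < 1 / μ))
  have heq : (fun x => -(1 / μ) * Real.log (∑ k, Real.exp (-μ * R k x)))
      = fun x => (1 / μ) • -Real.log (∑ k, Real.exp (-μ * R k x)) := by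
    funext x
    simp [smul_eq_mul]
    try ring
  rw [heq]
  exact h

end Aux

/-- Theorem 2 of the paper: the log-sum-exp smoothed quadratic surrogate
objective of a multicast group is biconcave in the precoding matrix `F` (columns
`f₁,…,f_G ∈ ℂ^N`) and the reflection coefficient vector `e ∈ ℂ^{M+1}`,
concavity being over ℝ. -/
theorem stmt7 (N M G : ℕ) (hN : 1 ≤ N) (hM : 1 ≤ M) (hG : 1 ≤ G)
    (μ : ℝ) (hμ : 0 < μ)
    {K : Type*} [Fintype K] [Nonempty K]
    (H : K → Matrix (Fin (M + 1)) (Fin N) ℂ) (g : K → Fin G)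
    (a : K → ℂ) (b : K → ℝ) (hb : ∀ k, 0 ≤ b k) (c : K → ℝ)
    (Rt : K → (Fin G → Fin N → ℂ) → (Fin (M + 1) → ℂ) → ℝ)
    (hRt : ∀ k F e, Rt k F e =
      c k + 2 * (a k * (star e ⬝ᵥ (H k).mulVec (F (g k)))).re
        - b k * ∑ i, ‖star e ⬝ᵥ (H k).mulVec (F i)‖ ^ 2)
    (f : (Fin G → Fin N → ℂ) → (Fin (M + 1) → ℂ) → ℝ)
    (hf : ∀ F e, f F e = -(1 / μ) * Real.log (∑ k, Real.exp (-μ * Rt k F e))) :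
    (∀ e : Fin (M + 1) → ℂ, ConcaveOn ℝ Set.univ fun F : Fin G → Fin N → ℂ => f F e) ∧
    (∀ F : Fin G → Fin N → ℂ, ConcaveOn ℝ Set.univ fun e : Fin (M + 1) → ℂ => f F e) := by
  constructor
  · intro e
    have hRconc : ∀ k, ConcaveOn ℝ Set.univ fun F : Fin G → Fin N → ℂ => Rt k F e := by
      intro k
      -- the ℝ-linear maps F ↦ eᴴ H_k f_i
      let L : Fin G → (Fin G → Fin N → ℂ) →ₗ[ℝ] ℂ := fun i =>
        { toFun := fun F => star e ⬝ᵥ (H k).mulVec (F i)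
          map_add' := by
            intro F F'
            simp [Matrix.mulVec_add, dotProduct_add]
          map_smul' := by
            intro r F
            simp [Matrix.mulVec_smul, dotProduct_smul] }
      have := concaveOn_surrogate (c k) (a k) (b k) (hb k) L (g k)
      have heq : (fun F => Rt k F e) = fun x =>
          c k + 2 * (a k * (L (g k)) x).re - b k * ∑ i, ‖(L i) x‖ ^ 2 := by
        funext F
        rw [hRt]
        rfl
      rw [heq]
      exact this
    have := concaveOn_smoothed μ hμ (fun k F => Rt k F e) hRconc
    have heq : (fun F => f F e) = fun x => -(1 / μ) * Real.log (∑ k, Real.exp (-μ * Rt k x e)) := by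
      funext F
      rw [hf]
    rw [heq]
    exact this
  · intro F
    have hRconc : ∀ k, ConcaveOn ℝ Set.univ fun e : Fin (M + 1) → ℂ => Rt k F e := by
      intro k
      -- the ℝ-linear maps e ↦ eᴴ H_k f_i
      let L : Fin G → (Fin (M + 1) → ℂ) →ₗ[ℝ] ℂ := fun i =>
        { toFun := fun e => star e ⬝ᵥ (H k).mulVec (F i)
          map_add' := by
            intro e e'
            simp [star_add, add_dotProduct]
          map_smul' := by
            intro r e
            have hst : star (r • e) = r • star e := by
              funext m
              simp [Complex.real_smul]
            rw [hst]
            simp [smul_dotProduct] }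
      have := concaveOn_surrogate (c k) (a k) (b k) (hb k) L (g k)
      have heq : (fun e => Rt k F e) = fun x =>
          c k + 2 * (a k * (L (g k)) x).re - b k * ∑ i, ‖(L i) x‖ ^ 2 := by
        funext e
        rw [hRt]
        rfl
      rw [heq]
      exact this
    have := concaveOn_smoothed μ hμ (fun k e => Rt k F e) hRconc
    have heq : (fun e => f F e) = fun x => -(1 / μ) * Real.log (∑ k, Real.exp (-μ * Rt k F x)) := by
      funext e
      rw [hf]
    rw [heq]
    exact this
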